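/- Let n ≥ 1, let α > 0, let Q_min ≤ Q_max be real numbers with Δ = Q_max − Q_min, and let q, q' ∈ ℝⁿ satisfy q_i, q'_i ∈ [Q_min, Q_max] for all i. Define f(b,q) = α·log(∑_{i=1}^n b_i·exp(q_i/α)). Then for all probability vectors b, b' ∈ ℝⁿ, |f(b,q) − f(b',q')| ≤ max_i |q_i − q'_i| + α·exp(Δ/α)·∑_{i=1}^n |b_i − b'_i|. -/
import Mathlib


/-- joint Lipschitz bound for log-sum-exp with base measure:
if all `qᵢ, q'ᵢ ∈ [Q_min, Q_max]` with `Δ = Q_max − Q_min`, then for all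
probability vectors `b, b'`,
`|f(b,q) − f(b',q')| ≤ maxᵢ |qᵢ − q'ᵢ| + α·exp(Δ/α)·∑ᵢ |bᵢ − b'ᵢ|`. -/
theorem logsumexp_joint_lipschitz
    (n : ℕ) (hn : 1 ≤ n)
    (α : ℝ) (hα : 0 < α)
    (Qmin Qmax : ℝ) (hQ : Qmin ≤ Qmax) (Δ : ℝ) (hΔ : Δ = Qmax - Qmin)
    (q q' : Fin n → ℝ)
    (hq : ∀ i, q i ∈ Set.Icc Qmin Qmax) (hq' : ∀ i, q' i ∈ Set.Icc Qmin Qmax)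
    (f : (Fin n → ℝ) → (Fin n → ℝ) → ℝ)
    (hf : ∀ b q, f b q = α * Real.log (∑ i, b i * Real.exp (q i / α))) :
    ∀ b b' : Fin n → ℝ,
      (∀ i, 0 ≤ b i) → (∑ i, b i = 1) →
      (∀ i, 0 ≤ b' i) → (∑ i, b' i = 1) →
      |f b q - f b' q'| ≤
        Finset.univ.sup' (Finset.univ_nonempty_iff.mpr ⟨⟨0, hn⟩⟩)
          (fun i => |q i - q' i|)
        + α * Real.exp (Δ / α) * ∑ i, |b i - b' i| := by
  intro b b' hb hbs hb' hb's
  set M : ℝ := Finset.univ.sup' (Finset.univ_nonempty_iff.mpr ⟨⟨0, hn⟩⟩)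
      (fun i => |q i - q' i|) with hMdef
  have hMle : ∀ i, |q i - q' i| ≤ M := fun i =>
    Finset.le_sup' (fun i => |q i - q' i|) (Finset.mem_univ i)
  -- bounds on the weighted sums
  have key : ∀ (c : Fin n → ℝ), (∀ i, 0 ≤ c i) → (∑ i, c i = 1) →
      ∀ (p : Fin n → ℝ), (∀ i, p i ∈ Set.Icc Qmin Qmax) →
      Real.exp (Qmin / α) ≤ (∑ i, c i * Real.exp (p i / α)) ∧
      (∑ i, c i * Real.exp (p i / α)) ≤ Real.exp (Qmax / α) := by
    intro c hc hcs p hp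
    constructor
    · calc Real.exp (Qmin / α) = ∑ i, c i * Real.exp (Qmin / α) := by
            rw [← Finset.sum_mul, hcs, one_mul]
      _ ≤ ∑ i, c i * Real.exp (p i / α) := by
            apply Finset.sum_le_sum
            intro i _
            exact mul_le_mul_of_nonneg_left
              (Real.exp_le_exp.mpr (div_le_div_of_nonneg_right (hp i).1 hα.le)) (hc i)
    · calc (∑ i, c i * Real.exp (p i / α)) ≤ ∑ i, c i * Real.exp (Qmax / α) := by
            apply Finset.sum_le_sum
            intro i _
            exact mul_le_mul_of_nonneg_left
              (Real.exp_le_exp.mpr (div_le_div_of_nonneg_right (hp i).2 hα.le)) (hc i)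
      _ = Real.exp (Qmax / α) := by rw [← Finset.sum_mul, hcs, one_mul]
  have hposmin : (0:ℝ) < Real.exp (Qmin / α) := Real.exp_pos _
  obtain ⟨h1l, h1u⟩ := key b hb hbs q hq
  obtain ⟨h2l, h2u⟩ := key b hb hbs q' hq'
  obtain ⟨h3l, h3u⟩ := key b' hb' hb's q' hq'
  set X : ℝ := ∑ i, b i * Real.exp (q i / α) with hX
  set Y : ℝ := ∑ i, b i * Real.exp (q' i / α) with hY
  set Z : ℝ := ∑ i, b' i * Real.exp (q' i / α) with hZ
  have hXpos : 0 < X := lt_of_lt_of_le hposmin h1l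
  have hYpos : 0 < Y := lt_of_lt_of_le hposmin h2l
  have hZpos : 0 < Z := lt_of_lt_of_le hposmin h3l
  -- one-sided q-shift step
  have step : ∀ (u v : Fin n → ℝ), (∀ i, |u i - v i| ≤ M) →
      0 < (∑ i, b i * Real.exp (u i / α)) →
      0 < (∑ i, b i * Real.exp (v i / α)) →
      α * Real.log (∑ i, b i * Real.exp (u i / α)) -
      α * Real.log (∑ i, b i * Real.exp (v i / α)) ≤ M := by
    intro u v huv hupos hvpos
    have hle : (∑ i, b i * Real.exp (u i / α)) ≤
        Real.exp (M / α) * ∑ i, b i * Real.exp (v i / α) := by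
      rw [Finset.mul_sum]
      apply Finset.sum_le_sum
      intro i _
      have hexp : Real.exp (u i / α) ≤ Real.exp (M / α) * Real.exp (v i / α) := by
        rw [← Real.exp_add]
        apply Real.exp_le_exp.mpr
        have h1 : u i - v i ≤ M := (abs_le.mp (huv i)).2
        have h2 := div_le_div_of_nonneg_right h1 hα.le
        rw [sub_div] at h2
        linarith
      calc b i * Real.exp (u i / α) ≤ b i * (Real.exp (M / α) * Real.exp (v i / α)) :=
            mul_le_mul_of_nonneg_left hexp (hb i)
        _ = Real.exp (M / α) * (b i * Real.exp (v i / α)) := by ring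
    have hlog : Real.log (∑ i, b i * Real.exp (u i / α)) ≤
        M / α + Real.log (∑ i, b i * Real.exp (v i / α)) := by
      calc Real.log (∑ i, b i * Real.exp (u i / α))
          ≤ Real.log (Real.exp (M / α) * ∑ i, b i * Real.exp (v i / α)) :=
            Real.log_le_log hupos hle
        _ = M / α + Real.log (∑ i, b i * Real.exp (v i / α)) := by
            rw [Real.log_mul (Real.exp_ne_zero _) (ne_of_gt hvpos), Real.log_exp]
    have := mul_le_mul_of_nonneg_left hlog (le_of_lt hα)
    rw [mul_add, mul_div_cancel₀ _ (ne_of_gt hα)] at this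
    linarith
  have hMsymm : ∀ i, |q' i - q i| ≤ M := by
    intro i; rw [abs_sub_comm]; exact hMle i
  have partA : |α * Real.log X - α * Real.log Y| ≤ M := by
    rw [abs_le]
    constructor
    · have := step q' q hMsymm hYpos hXpos
      linarith
    · exact step q q' hMle hXpos hYpos
  -- Part B : |α log Y - α log Z| ≤ α exp(Δ/α) ∑ |b - b'|
  set D : ℝ := ∑ i, |b i - b' i| with hD
  have hdiff : |Y - Z| ≤ Real.exp (Qmax / α) * D := by
    have : Y - Z = ∑ i, (b i - b' i) * Real.exp (q' i / α) := by
      rw [hY, hZ, ← Finset.sum_sub_distrib]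
      congr 1; funext i; ring
    rw [this]
    calc |∑ i, (b i - b' i) * Real.exp (q' i / α)|
        ≤ ∑ i, |(b i - b' i) * Real.exp (q' i / α)| := Finset.abs_sum_le_sum_abs _ _
      _ ≤ ∑ i, Real.exp (Qmax / α) * |b i - b' i| := by
          apply Finset.sum_le_sum
          intro i _
          rw [abs_mul, abs_of_pos (Real.exp_pos _), mul_comm]
          apply mul_le_mul_of_nonneg_right _ (abs_nonneg _)
          exact Real.exp_le_exp.mpr (div_le_div_of_nonneg_right (hq' i).2 hα.le)
      _ = Real.exp (Qmax / α) * D := by rw [hD, Finset.mul_sum]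
  have logstep : ∀ x y : ℝ, Real.exp (Qmin / α) ≤ y → 0 < x →
      |x - y| ≤ Real.exp (Qmax / α) * D →
      Real.log x - Real.log y ≤ Real.exp (Δ / α) * D := by
    intro x y hy hx hxy
    have hypos : 0 < y := lt_of_lt_of_le hposmin hy
    have h1 : Real.log x - Real.log y = Real.log (x / y) := by
      rw [Real.log_div (ne_of_gt hx) (ne_of_gt hypos)]
    rw [h1]
    have h2 : Real.log (x / y) ≤ x / y - 1 :=
      Real.log_le_sub_one_of_pos (div_pos hx hypos)
    have h3 : x / y - 1 = (x - y) / y := by field_simp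
    have h4 : (x - y) / y ≤ |x - y| / Real.exp (Qmin / α) := by
      apply div_le_div₀ (abs_nonneg _) (le_abs_self _) hposmin hy
    have h5 : |x - y| / Real.exp (Qmin / α) ≤
        Real.exp (Qmax / α) * D / Real.exp (Qmin / α) :=
      div_le_div_of_nonneg_right hxy hposmin.le
    have h6 : Real.exp (Qmax / α) * D / Real.exp (Qmin / α) = Real.exp (Δ / α) * D := by
      rw [hΔ, sub_div, Real.exp_sub]
      ring
    linarith
  have hdiff' : |Z - Y| ≤ Real.exp (Qmax / α) * D := by rw [abs_sub_comm]; exact hdiff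
  have partB : |α * Real.log Y - α * Real.log Z| ≤ α * Real.exp (Δ / α) * D := by
    have bYZ := logstep Y Z h3l hYpos hdiff
    have bZY := logstep Z Y h2l hZpos hdiff'
    rw [abs_le]
    constructor
    · nlinarith [mul_le_mul_of_nonneg_left bZY (le_of_lt hα)]
    · nlinarith [mul_le_mul_of_nonneg_left bYZ (le_of_lt hα)]
  calc |f b q - f b' q'| = |(α * Real.log X - α * Real.log Y) +
        (α * Real.log Y - α * Real.log Z)| := by
        rw [hf, hf, ← hX, ← hZ]; congr 1; ring
    _ ≤ |α * Real.log X - α * Real.log Y| + |α * Real.log Y - α * Real.log Z| :=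
        abs_add_le _ _
    _ ≤ M + α * Real.exp (Δ / α) * D := add_le_add partA partB
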